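/- Let A be an odd cluster in T_d, let B ∈ ℬ(A), and let C be the set induced by B. Then C ⊆ A. -/
import Mathlib


open MeasureTheory

/-- `x` has at least two `G`-neighbors in the set `B`. -/
def TwoNbrsIn {V : Type} (G : SimpleGraph V) (B : Set V) (x : V) : Prop :=
  ∃ y ∈ B, ∃ z ∈ B, y ≠ z ∧ G.Adj x y ∧ G.Adj x z

/-- `x` is an odd vertex: its graph distance to the fixed root `o` is odd. -/
def IsOddV {V : Type} (G : SimpleGraph V) (o x : V) : Prop := Odd (G.dist o x)

/-- `x` is an even vertex: its graph distance to the fixed root `o` is even. -/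
def IsEvenV {V : Type} (G : SimpleGraph V) (o x : V) : Prop := Even (G.dist o x)

/-- `S` is connected with respect to the double-neighbor relation (graph distance 2)
within `S`. -/
def DNConnected {V : Type} (G : SimpleGraph V) (S : Set V) : Prop :=
  ∀ x ∈ S, ∀ y ∈ S,
    Relation.ReflTransGen (fun a b => a ∈ S ∧ b ∈ S ∧ G.dist a b = 2) x y

/-- An odd cluster: a finite nonempty set of odd vertices, connected under the
double-neighbor relation. -/
def IsOddCluster {V : Type} (G : SimpleGraph V) (o : V) (A : Set V) : Prop :=
  A.Finite ∧ A.Nonempty ∧ (∀ x ∈ A, IsOddV G o x) ∧ DNConnected G A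

/-- An even cluster: a finite nonempty set of even vertices, connected under the
double-neighbor relation. -/
def IsEvenCluster {V : Type} (G : SimpleGraph V) (o : V) (A : Set V) : Prop :=
  A.Finite ∧ A.Nonempty ∧ (∀ x ∈ A, IsEvenV G o x) ∧ DNConnected G A

/-- Two vertex sets (of the same parity) are non-adjacent: they are disjoint and no
pair of points of the two sets is at graph distance 2 (so their graph distance
exceeds 2). -/
def NonAdj {V : Type} (G : SimpleGraph V) (A B : Set V) : Prop :=
  Disjoint A B ∧ ∀ a ∈ A, ∀ b ∈ B, G.dist a b ≠ 2

/-- The neighborhood `N(A)` of a vertex set `A`. -/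
def nbhd {V : Type} (G : SimpleGraph V) (A : Set V) : Set V := {y | ∃ x ∈ A, G.Adj x y}

/-- `Prr G A B`: the set of elements of `A` having at least two neighbors in `B`. -/
def Prr {V : Type} (G : SimpleGraph V) (A B : Set V) : Set V := {v ∈ A | TwoNbrsIn G B v}

/-- The set induced by `B`: vertices outside `B` with at least two neighbors in `B`. -/
def inducedSet {V : Type} (G : SimpleGraph V) (B : Set V) : Set V :=
  {x | x ∉ B ∧ TwoNbrsIn G B x}

/-- `ℬ(A)`: the collection of sets `B ⊆ N(A)` such that no proper subset of `B` has the
same `Prr`-value. -/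
def minimalB {V : Type} (G : SimpleGraph V) (A : Set V) : Set (Set V) :=
  {B | B ⊆ nbhd G A ∧ ∀ B' : Set V, B' ⊂ B → Prr G A B' ≠ Prr G A B}

/-- `ℬ(A, C)`: the members of `ℬ(A)` whose `Prr`-value is `C`. -/
def minimalBC {V : Type} (G : SimpleGraph V) (A C : Set V) : Set (Set V) :=
  {B | B ∈ minimalB G A ∧ Prr G A B = C}

section Helpers

variable {V : Type} {G : SimpleGraph V}

/-- If `w` lies on a walk from `u` to `v`, the distances decompose. -/
lemma support_dist_le {u v w : V} (p : G.Walk u v) (hw : w ∈ p.support) :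
    G.dist u w + G.dist w v ≤ p.length := by
  classical
  have hspec := p.take_spec hw
  have hlen : (p.takeUntil w hw).length + (p.dropUntil w hw).length = p.length := by
    rw [← SimpleGraph.Walk.length_append, hspec]
  have h1 := SimpleGraph.dist_le (p.takeUntil w hw)
  have h2 := SimpleGraph.dist_le (p.dropUntil w hw)
  omega

/-- In a tree, distances to a fixed root change by exactly one along an edge. -/
lemma adj_dist_step (hconn : G.Connected) (hacyc : G.IsAcyclic) {r a b : V}
    (hab : G.Adj a b) :
    G.dist r b = G.dist r a + 1 ∨ G.dist r a = G.dist r b + 1 := by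
  have hd1 : G.dist a b = 1 := SimpleGraph.dist_eq_one_iff_adj.mpr hab
  have hub : G.dist r b ≤ G.dist r a + 1 := by
    have := hconn.dist_triangle (u := r) (v := a) (w := b)
    omega
  have hua : G.dist r a ≤ G.dist r b + 1 := by
    have := hconn.dist_triangle (u := r) (v := b) (w := a)
    have : G.dist b a = 1 := SimpleGraph.dist_eq_one_iff_adj.mpr hab.symm
    omega
  have hne : G.dist r a ≠ G.dist r b := by
    intro heq
    obtain ⟨p, hp, hpl⟩ := hconn.exists_path_of_dist r a
    obtain ⟨q, hq, hql⟩ := hconn.exists_path_of_dist r b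
    have hbp : b ∉ p.support := by
      intro hmem
      have := support_dist_le p hmem
      have : G.dist b a = 1 := SimpleGraph.dist_eq_one_iff_adj.mpr hab.symm
      omega
    -- two paths from `b` to `r`
    have hP1 : (SimpleGraph.Walk.cons hab.symm p.reverse).IsPath := by
      rw [SimpleGraph.Walk.cons_isPath_iff]
      refine ⟨hp.reverse, ?_⟩
      rwa [SimpleGraph.Walk.support_reverse, List.mem_reverse]
    have hP2 : q.reverse.IsPath := hq.reverse
    have heqp : (⟨SimpleGraph.Walk.cons hab.symm p.reverse, hP1⟩ : G.Path b r)
        = ⟨q.reverse, hP2⟩ := hacyc.path_unique _ _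
    have hlen := congrArg (fun P : G.Path b r => P.1.length) heqp
    simp only [SimpleGraph.Walk.length_cons, SimpleGraph.Walk.length_reverse] at hlen
    omega
  omega

/-- Parity flips along edges in a tree. -/
lemma adj_parity (hconn : G.Connected) (hacyc : G.IsAcyclic) {o a b : V}
    (hab : G.Adj a b) : Odd (G.dist o a) ↔ Even (G.dist o b) := by
  rcases adj_dist_step hconn hacyc hab (r := o) with h | h <;>
    simp [Nat.odd_iff, Nat.even_iff] <;> omega

/-- Key branch-preservation step: if the geodesic from `x` to `a` starts with the
neighbor `y`, and `b` is adjacent to `a` with `b ≠ x`, then the geodesic from `x`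
to `b` also starts with `y`. -/
lemma branch_step (hconn : G.Connected) (hacyc : G.IsAcyclic) {x y a b : V}
    (hxy : G.Adj x y) (hab : G.Adj a b) (hbx : b ≠ x)
    (ha : G.dist y a + 1 = G.dist x a) : G.dist y b + 1 = G.dist x b := by
  have hdab : G.dist a b = 1 := SimpleGraph.dist_eq_one_iff_adj.mpr hab
  have hdxy : G.dist x y = 1 := SimpleGraph.dist_eq_one_iff_adj.mpr hxy
  set n := G.dist x a with hn
  rcases adj_dist_step hconn hacyc hab (r := x) with hcase | hcase
  · -- dist x b = n + 1
    have h1 : G.dist y b ≤ G.dist y a + 1 := by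
      have := hconn.dist_triangle (u := y) (v := a) (w := b); omega
    have h2 : G.dist x b ≤ G.dist x y + G.dist y b := hconn.dist_triangle
    omega
  · -- dist x b = n - 1 : the hard case, use path uniqueness
    have hnb : G.dist x b ≠ 0 := by
      intro h0
      exact hbx ((hconn.dist_eq_zero_iff).mp h0).symm
    obtain ⟨q, hq, hql⟩ := hconn.exists_path_of_dist y a
    obtain ⟨p, hp, hpl⟩ := hconn.exists_path_of_dist x b
    have hxq : x ∉ q.support := by
      intro hmem
      have := support_dist_le q hmem
      rw [SimpleGraph.dist_comm (u := y) (v := x)] at this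
      omega
    have hap : a ∉ p.support := by
      intro hmem
      have := support_dist_le p hmem
      rw [SimpleGraph.dist_comm (u := a) (v := b)] at this
      omega
    -- two paths from `a` to `x`
    have hP1 : (SimpleGraph.Walk.cons hxy q).IsPath := by
      rw [SimpleGraph.Walk.cons_isPath_iff]; exact ⟨hq, hxq⟩
    have hP2 : (SimpleGraph.Walk.cons hab p.reverse).IsPath := by
      rw [SimpleGraph.Walk.cons_isPath_iff]
      refine ⟨hp.reverse, ?_⟩
      rwa [SimpleGraph.Walk.support_reverse, List.mem_reverse]
    have heqp : (SimpleGraph.Path.reverse (⟨SimpleGraph.Walk.cons hxy q, hP1⟩ : G.Path x a))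
        = ⟨SimpleGraph.Walk.cons hab p.reverse, hP2⟩ := hacyc.path_unique _ _
    have hbsupp := congrArg (fun P : G.Path a x => b ∈ P.1.support) heqp
    simp only [SimpleGraph.Path.reverse, SimpleGraph.Walk.support_reverse,
      List.mem_reverse, SimpleGraph.Walk.support_cons, List.mem_cons,
      SimpleGraph.Walk.start_mem_support, eq_iff_iff] at hbsupp
    have hbmem : b = x ∨ b ∈ q.support := hbsupp.mpr (Or.inr p.end_mem_support)
    have hbq : b ∈ q.support := hbmem.resolve_left hbx
    have hdec := support_dist_le q hbq
    have h1 : G.dist b a = 1 := SimpleGraph.dist_eq_one_iff_adj.mpr hab.symm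
    have h2 : G.dist x b ≤ G.dist x y + G.dist y b := hconn.dist_triangle
    omega

/-- A geodesic of length two has a midpoint. -/
lemma exists_mid (hconn : G.Connected) {c c' : V} (h : G.dist c c' = 2) :
    ∃ m, G.Adj c m ∧ G.Adj m c' := by
  obtain ⟨p, hp⟩ := hconn.exists_walk_length_eq_dist c c'
  rw [h] at hp
  cases p with
  | nil => simp at hp
  | cons h1 q =>
    cases q with
    | nil => simp at hp
    | cons h2 q' =>
      cases q' with
      | nil => exact ⟨_, h1, h2⟩
      | cons h3 q'' => simp [SimpleGraph.Walk.length_cons] at hp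

end Helpers

/-- **Lemma.** On the infinite `d`-regular tree, if `A` is an odd cluster and
`B ∈ ℬ(A)`, then the set induced by `B` is contained in `A`. -/
theorem induced_of_minimal_subset (d : ℕ) (hd : 3 ≤ d)
    (V : Type) (G : SimpleGraph V) (o : V)
    (hconn : G.Connected) (hacyc : G.IsAcyclic)
    (hreg : ∀ v : V, (G.neighborSet v).ncard = d)
    (A : Set V) (hA : IsOddCluster G o A)
    (B : Set V) (hB : B ∈ minimalB G A) :
    inducedSet G B ⊆ A := by
  intro x hx
  by_contra hxA
  obtain ⟨hxB, y, hyB, z, hzB, hyz, hxy, hxz⟩ := hx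
  obtain ⟨hAfin, hAne, hAodd, hAconn⟩ := hA
  obtain ⟨hBsub, _⟩ := hB
  obtain ⟨ay, hayA, hay⟩ := hBsub hyB
  obtain ⟨az, hazA, haz⟩ := hBsub hzB
  -- parity facts
  have hodd_ay : Odd (G.dist o ay) := hAodd ay hayA
  have hodd_az : Odd (G.dist o az) := hAodd az hazA
  have hevy : Even (G.dist o y) := (adj_parity hconn hacyc hay).mp hodd_ay
  have hevz : Even (G.dist o z) := (adj_parity hconn hacyc haz).mp hodd_az
  have hoddx : Odd (G.dist o x) := (adj_parity hconn hacyc hxy (o := o)).mpr hevy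
  -- no adjacency between two odd vertices
  have noadj : ∀ c : V, Odd (G.dist o c) → ¬ G.Adj x c := by
    intro c hc hadj
    exact Nat.not_odd_iff_even.mpr ((adj_parity hconn hacyc hadj).mp hoddx) hc
  -- distance from x to a member of A adjacent to a neighbor of x is 2
  have base : ∀ (w c : V), G.Adj x w → G.Adj c w → c ∈ A →
      G.dist w c = 1 ∧ G.dist x c = 2 := by
    intro w c hxw hcw hcA
    have hwc : G.dist w c = 1 := SimpleGraph.dist_eq_one_iff_adj.mpr hcw.symm
    have hle : G.dist x c ≤ 2 := by
      have := SimpleGraph.dist_le (SimpleGraph.Walk.cons hxw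
        (SimpleGraph.Walk.cons hcw.symm SimpleGraph.Walk.nil))
      simpa using this
    have hne0 : G.dist x c ≠ 0 := by
      intro h0
      obtain rfl := hconn.dist_eq_zero_iff.mp h0
      exact hxA hcA
    have hne1 : G.dist x c ≠ 1 := by
      intro h1
      exact noadj c (hAodd c hcA) (SimpleGraph.dist_eq_one_iff_adj.mp h1)
    exact ⟨hwc, by omega⟩
  obtain ⟨hyay, hxay⟩ := base y ay hxy hay hayA
  obtain ⟨hzaz, hxaz⟩ := base z az hxz haz hazA
  -- invariant: every element of A reachable from ay (by dist-2 steps) is in the y-branch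
  have key : ∀ c : V,
      Relation.ReflTransGen (fun a b => a ∈ A ∧ b ∈ A ∧ G.dist a b = 2) ay c →
      G.dist y c + 1 = G.dist x c := by
    intro c h
    induction h with
    | refl => omega
    | @tail c c' _ hstep ih =>
      obtain ⟨hcA, hc'A, hd2⟩ := hstep
      obtain ⟨m, hcm, hmc'⟩ := exists_mid hconn hd2
      have hmx : m ≠ x := by
        rintro rfl
        exact noadj c (hAodd c hcA) hcm.symm
      have hc'x : c' ≠ x := by rintro rfl; exact hxA hc'A
      have h1 := branch_step hconn hacyc hxy hcm hmx ih
      exact branch_step hconn hacyc hxy hmc' hc'x h1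
  have hfin := key az (hAconn ay hayA az hazA)
  have hyaz : G.Adj y az := SimpleGraph.dist_eq_one_iff_adj.mp (by omega)
  -- now x-y-az-z-x would be a 4-cycle: contradiction via path uniqueness
  have hxaz' : x ≠ az := by rintro rfl; exact hxA hazA
  have hyx : y ≠ x := fun h => Nat.not_odd_iff_even.mpr hevy (by rw [h]; exact hoddx)
  have hyz' : y ≠ z := hyz
  have hxz' : x ≠ z := by
    intro h
    rw [← h] at hevz
    exact Nat.not_odd_iff_even.mpr hevz hoddx
  have hyaz' : y ≠ az := by
    intro h
    rw [h] at hevy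
    exact Nat.not_odd_iff_even.mpr hevy hodd_az
  have hzaz' : z ≠ az := by
    intro h
    rw [h] at hevz
    exact Nat.not_odd_iff_even.mpr hevz hodd_az
  have hP1 : (SimpleGraph.Walk.cons hxy.symm
      (SimpleGraph.Walk.cons hxz SimpleGraph.Walk.nil)).IsPath := by
    simp [SimpleGraph.Walk.cons_isPath_iff, hyx, hyz', hxz']
  have hP2 : (SimpleGraph.Walk.cons hyaz
      (SimpleGraph.Walk.cons haz SimpleGraph.Walk.nil)).IsPath := by
    simp [SimpleGraph.Walk.cons_isPath_iff, hyaz', Ne.symm hzaz', hyz']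
  have heqp : (⟨_, hP1⟩ : G.Path y z) = ⟨_, hP2⟩ := hacyc.path_unique _ _
  have hsupp := congrArg (fun P : G.Path y z => P.1.support) heqp
  simp only [SimpleGraph.Walk.support_cons, SimpleGraph.Walk.support_nil] at hsupp
  have : x = az := by
    injection hsupp with _ h'
    injection h' with h'' _
  exact hxaz' this
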